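/- If D is a cut-free and lazy derivation of LEM, then all judgments occurring in D are lazy, and D contains no instances of the rules ∀L, d, w, c, nor of the rule p with a non-empty context. -/

import Mathlib

namespace LEMPaper

/-! ## Types of `LEM` -/

/-- Types of `LEM`: raw syntax `σ ::= α | σ ⊸ τ | ∀α.σ | ♯σ`
(type variables in de Bruijn representation).  The grammar of the paper
(exponential types `σ ::= A | ♯σ`, linear types `A ::= α | σ ⊸ A | ∀α.A`) is
carved out by the predicates `IsLinear` and `IsExp` below. -/
inductive LTy : Type
  | var : ℕ → LTy
  | arr : LTy → LTy → LTy
  | all : LTy → LTy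
  | bang : LTy → LTy
  deriving DecidableEq

namespace LTy

def liftRen (ρ : ℕ → ℕ) : ℕ → ℕ
  | 0 => 0
  | n + 1 => ρ n + 1

def rename (ρ : ℕ → ℕ) : LTy → LTy
  | var n => var (ρ n)
  | arr A B => arr (A.rename ρ) (B.rename ρ)
  | all A => all (A.rename (liftRen ρ))
  | bang A => bang (A.rename ρ)

/-- Shift all free type variables up by one. -/
def shift (A : LTy) : LTy := A.rename Nat.succ

def liftSub (s : ℕ → LTy) : ℕ → LTy
  | 0 => var 0
  | n + 1 => (s n).shift

def substAll (s : ℕ → LTy) : LTy → LTy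
  | var n => s n
  | arr A B => arr (A.substAll s) (B.substAll s)
  | all A => all (A.substAll (liftSub s))
  | bang A => bang (A.substAll s)

/-- `A.instTop B` instantiates the outermost bound type variable of `A` with `B`. -/
def instTop (A B : LTy) : LTy :=
  A.substAll (fun n => match n with | 0 => B | m + 1 => var m)

/-- All free type variables are `< d`. -/
def ClosedAt : LTy → ℕ → Prop
  | var n, d => n < d
  | arr A B, d => A.ClosedAt d ∧ B.ClosedAt d
  | all A, d => A.ClosedAt (d + 1)
  | bang A, d => A.ClosedAt d

/-- `noForall A true` : `A` has no positive occurrence of `∀`;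
`noForall A false` : `A` has no negative occurrence of `∀`. -/
def noForall : LTy → Bool → Prop
  | var _, _ => True
  | arr A B, b => A.noForall (!b) ∧ B.noForall b
  | all A, b => b = false ∧ A.noForall b
  | bang A, b => A.noForall b

/-- A type is *lazy* if it contains no negative occurrences of `∀`. -/
def Lazy (A : LTy) : Prop := A.noForall false

/-- The size (number of nodes of the syntax tree) of a type. -/
def size : LTy → ℕ
  | var _ => 1
  | arr A B => A.size + B.size + 1
  | all A => A.size + 1
  | bang A => A.size + 1

/-- The number of occurrences of `∀` and `♯` in a type. -/
def qmCount : LTy → ℕ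
  | var _ => 0
  | arr A B => A.qmCount + B.qmCount
  | all A => A.qmCount + 1
  | bang A => A.qmCount + 1

end LTy

mutual
  /-- Linear types: `A ::= α | σ ⊸ A | ∀α.A`. -/
  inductive LTy.IsLinear : LTy → Prop
    | var (n : ℕ) : LTy.IsLinear (.var n)
    | arr {σ A : LTy} : LTy.IsExp σ → LTy.IsLinear A → LTy.IsLinear (.arr σ A)
    | all {A : LTy} : LTy.IsLinear A → LTy.IsLinear (.all A)
  /-- Exponential types: `σ ::= A | ♯σ`, where in `♯σ` the type `σ` must be
  closed and without negative occurrences of `∀`. -/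
  inductive LTy.IsExp : LTy → Prop
    | lin {A : LTy} : LTy.IsLinear A → LTy.IsExp A
    | bang {σ : LTy} : LTy.IsExp σ → σ.ClosedAt 0 → σ.noForall false →
        LTy.IsExp (.bang σ)
end

/-- Well-formedness of the modal type `♯σ`: `σ` is an exponential type,
closed and without negative occurrences of `∀`. -/
def LTy.BangOk (σ : LTy) : Prop := σ.IsExp ∧ σ.ClosedAt 0 ∧ σ.noForall false

/-! ## Terms of `LEM` -/

/-- Terms of `LEM` (Definition 4.2), de Bruijn representation:
`M ::= x | λx.M | M N | discard_σ M in N | copy^V_σ M as x,y in N`.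
In `copy σ V S B`, `B` is the body (with two bound variables: `1` for the first
copy-variable and `0` for the second one), `S` the copied term, `V` the value
annotation. -/
inductive LTm : Type
  | var : ℕ → LTm
  | app : LTm → LTm → LTm
  | lam : LTm → LTm
  | discard : LTy → LTm → LTm → LTm
  | copy : LTy → LTm → LTm → LTm → LTm
  deriving DecidableEq

namespace LTm

def liftRen (ρ : ℕ → ℕ) : ℕ → ℕ
  | 0 => 0
  | n + 1 => ρ n + 1

/-- Renaming of free variables (the closed value annotation of `copy` is untouched). -/
def rename (ρ : ℕ → ℕ) : LTm → LTm
  | var n => var (ρ n)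
  | app M N => app (M.rename ρ) (N.rename ρ)
  | lam M => lam (M.rename (liftRen ρ))
  | discard σ M N => discard σ (M.rename ρ) (N.rename ρ)
  | copy σ V S B => copy σ V (S.rename ρ) (B.rename (liftRen (liftRen ρ)))

/-- Shift all free variables up by one. -/
def shift (M : LTm) : LTm := M.rename Nat.succ

def liftSub (s : ℕ → LTm) : ℕ → LTm
  | 0 => var 0
  | n + 1 => (s n).shift

/-- Simultaneous capture-avoiding substitution. -/
def substAll (s : ℕ → LTm) : LTm → LTm
  | var n => s n
  | app M N => app (M.substAll s) (N.substAll s)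
  | lam M => lam (M.substAll (liftSub s))
  | discard σ M N => discard σ (M.substAll s) (N.substAll s)
  | copy σ V S B => copy σ V (S.substAll s) (B.substAll (liftSub (liftSub s)))

/-- Capture-avoiding substitution `M[N/n]`; variables above `n` are decremented. -/
def subst (M : LTm) (n : ℕ) (N : LTm) : LTm :=
  M.substAll (fun m => if m < n then var m else if m = n then N else var (m - 1))

/-- Substitute the term `V` for both bound variables of a `copy`-body. -/
def subst2 (B V : LTm) : LTm :=
  B.substAll (fun m => match m with | 0 => V | 1 => V | n + 2 => var n)

/-- Number of (free) occurrences of the variable `n` in a term. -/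
def countFree : LTm → ℕ → ℕ
  | var m, n => if m = n then 1 else 0
  | app M N, n => M.countFree n + N.countFree n
  | lam M, n => M.countFree (n + 1)
  | discard _ M N, n => M.countFree n + N.countFree n
  | copy _ _ S B, n => S.countFree n + B.countFree (n + 2)

/-- A term is closed when it has no free variables. -/
def ClosedTm (M : LTm) : Prop := ∀ n, M.countFree n = 0

/-- Linearity of `LEM` terms (Definition 4.2): every free variable occurs exactly
once, and all bound variables (of `λ` and of `copy`) occur in their scope. -/
def LinearTm : LTm → Prop
  | var _ => True
  | app M N => M.LinearTm ∧ N.LinearTm ∧ ∀ n, M.countFree n = 0 ∨ N.countFree n = 0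
  | lam M => M.LinearTm ∧ M.countFree 0 = 1
  | discard _ M N => M.LinearTm ∧ N.LinearTm ∧
      ∀ n, M.countFree n = 0 ∨ N.countFree n = 0
  | copy _ _ S B => S.LinearTm ∧ B.LinearTm ∧ B.countFree 0 = 1 ∧ B.countFree 1 = 1 ∧
      ∀ n, S.countFree n = 0 ∨ B.countFree (n + 2) = 0

/-- Purity: the term is an ordinary λ-term (no `discard`/`copy` constructs). -/
def IsPure : LTm → Prop
  | var _ => True
  | app M N => M.IsPure ∧ N.IsPure
  | lam M => M.IsPure
  | discard _ _ _ => False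
  | copy _ _ _ _ => False

/-- The size of a term (Definition 4.2); the value annotation of `copy` counts. -/
def size : LTm → ℕ
  | var _ => 1
  | app M N => M.size + N.size + 1
  | lam M => M.size + 1
  | discard _ M N => M.size + N.size + 1
  | copy _ V S B => S.size + B.size + V.size + 1

end LTm

/-- β-reduction on (pure) terms, used to define β-normality of values. -/
inductive PureStep : LTm → LTm → Prop
  | beta (M N : LTm) : PureStep (.app (.lam M) N) (M.subst 0 N)
  | appL {M M'} (N : LTm) : PureStep M M' → PureStep (.app M N) (.app M' N)
  | appR (M : LTm) {N N'} : PureStep N N' → PureStep (.app M N) (.app M N')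
  | lam {M M'} : PureStep M M' → PureStep (.lam M) (.lam M')

/-- A value is a closed linear λ-term (pure, i.e. `discard`/`copy`-free) in
β-normal form. -/
def IsValue (V : LTm) : Prop :=
  V.IsPure ∧ V.LinearTm ∧ V.ClosedTm ∧ ∀ W, ¬ PureStep V W

/-- The one-step reduction relation `→` on terms of `LEM` (Figures 2 and 3):
β-reduction, discarding and copying of values, and the commuting conversions,
all closed under arbitrary contexts. -/
inductive Step : LTm → LTm → Prop
  -- Figure 2: reduction rules
  | beta (M N : LTm) : Step (.app (.lam M) N) (M.subst 0 N)
  | discardV {V : LTm} (σ : LTy) (M : LTm) :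
      IsValue V → Step (.discard σ V M) M
  | copyV {V : LTm} (σ : LTy) (U B : LTm) :
      IsValue V → Step (.copy σ U V B) (B.subst2 V)
  -- Figure 3: commuting conversions
  | discardApp (σ : LTy) (M N P : LTm) :
      Step (.app (.discard σ M N) P) (.discard σ M (.app N P))
  | discardDiscard (σ τ : LTy) (M N P : LTm) :
      Step (.discard σ (.discard τ M N) P) (.discard τ M (.discard σ N P))
  | copyDiscard (σ τ : LTy) (V M N B : LTm) :
      Step (.copy σ V (.discard τ M N) B) (.discard τ M (.copy σ V N B))
  | copyApp (σ : LTy) (V M B P : LTm) :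
      Step (.app (.copy σ V M B) P) (.copy σ V M (.app B (P.rename (· + 2))))
  | discardCopy (σ τ : LTy) (V M N P : LTm) :
      Step (.discard σ (.copy τ V M N) P)
           (.copy τ V M (.discard σ N (P.rename (· + 2))))
  | copyCopy (σ τ : LTy) (U V M N P : LTm) :
      Step (.copy σ U (.copy τ V M N) P)
           (.copy τ V M (.copy σ U N (P.rename (fun n => if n < 2 then n else n + 2))))
  -- contextual closure
  | appL {M M'} (N : LTm) : Step M M' → Step (.app M N) (.app M' N)
  | appR (M : LTm) {N N'} : Step N N' → Step (.app M N) (.app M N')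
  | lamC {M M'} : Step M M' → Step (.lam M) (.lam M')
  | discardL (σ : LTy) {M M'} (N : LTm) : Step M M' → Step (.discard σ M N) (.discard σ M' N)
  | discardR (σ : LTy) (M : LTm) {N N'} : Step N N' → Step (.discard σ M N) (.discard σ M N')
  | copyS (σ : LTy) (V : LTm) {S S'} (B : LTm) : Step S S' → Step (.copy σ V S B) (.copy σ V S' B)
  | copyB (σ : LTy) (V S : LTm) {B B'} : Step B B' → Step (.copy σ V S B) (.copy σ V S B')

/-! ## The sequent calculus `LEM` -/

/-- The renaming swapping the de Bruijn variables `k` and `k+1`. -/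
def swapVar (k : ℕ) (n : ℕ) : ℕ :=
  if n = k then k + 1 else if n = k + 1 then k else n

/-- Term produced by the `cut` rule: substitute `N` (whose variables point into the
first `g` positions) for the variable `0` of `M`, re-addressing the remaining
variables of `M`. -/
def cutTm (g : ℕ) (N M : LTm) : LTm :=
  M.substAll (fun n => match n with
    | 0 => N
    | m + 1 => .var (g + m))

/-- Term produced by the `⊸L` rule: `M[yN/x]`, with the new variable `y` at
position `0`. -/
def arrLTm (g : ℕ) (N M : LTm) : LTm :=
  M.substAll (fun n => match n with
    | 0 => .app (.var 0) N.shift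
    | m + 1 => .var (g + 1 + m))

/-- The type-assignment system `LEM` (Figure 5), as a sequent calculus with
contexts rendered as lists; the implicit exchange of multiset contexts is
rendered by the structural rule `exch` (which is invisible in the paper and
contributes no size).  The rules `prom` (p), `der` (d), `weak` (w) and
`contr` (c) handle the modality `♯`. -/
inductive Der : List LTy → LTm → LTy → Type
  | ax {A : LTy} : A.IsLinear → Der [A] (.var 0) A
  | exch (Γ₁ : List LTy) {σ τ : LTy} {Γ₂ : List LTy} {M : LTm} {C : LTy} :
      Der (Γ₁ ++ σ :: τ :: Γ₂) M C →
      Der (Γ₁ ++ τ :: σ :: Γ₂) (M.rename (swapVar Γ₁.length)) C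
  | cut (Γ : List LTy) {Δ : List LTy} {N M : LTm} {σ τ : LTy} :
      Der Γ N σ → Der (σ :: Δ) M τ →
      Der (Γ ++ Δ) (cutTm Γ.length N M) τ
  | arrR {Γ : List LTy} {M : LTm} {σ B : LTy} :
      B.IsLinear → Der (σ :: Γ) M B → Der Γ (.lam M) (σ.arr B)
  | arrL (Γ : List LTy) {Δ : List LTy} {N M : LTm} {σ B τ : LTy} :
      B.IsLinear → Der Γ N σ → Der (B :: Δ) M τ →
      Der ((σ.arr B) :: (Γ ++ Δ)) (arrLTm Γ.length N M) τ
  | allR {Γ : List LTy} {M : LTm} {A : LTy} :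
      A.IsLinear → Der (Γ.map LTy.shift) M A → Der Γ M (.all A)
  | allL {Γ : List LTy} {M : LTm} {A τ : LTy} (B : LTy) :
      B.IsLinear → Der ((A.instTop B) :: Γ) M τ → Der ((.all A) :: Γ) M τ
  | prom {Γ : List LTy} {M : LTm} {σ : LTy} :
      σ.BangOk → (∀ τ ∈ Γ, ∃ ρ, τ = LTy.bang ρ) → Der Γ M σ → Der Γ M (.bang σ)
  | der {Γ : List LTy} {M : LTm} {σ τ : LTy} :
      σ.BangOk → Der (σ :: Γ) M τ → Der ((.bang σ) :: Γ) M τ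
  | weak {Γ : List LTy} {M : LTm} {σ τ : LTy} :
      σ.BangOk → Der Γ M τ →
      Der ((.bang σ) :: Γ) (.discard σ (.var 0) M.shift) τ
  | contr {Γ : List LTy} {M V : LTm} {σ τ : LTy} :
      σ.BangOk → IsValue V →
      Der ((.bang σ) :: (.bang σ) :: Γ) M τ → Der [] V σ →
      Der ((.bang σ) :: Γ)
        (.copy σ V (.var 0) (M.rename (fun n => if n < 2 then n else n + 1))) τ

/-- A judgment `x₁:σ₁,…,xₙ:σₙ ⊢ M : τ` is *lazy* when `τ` has no negative
occurrence of `∀` and the `σᵢ` have no positive occurrence of `∀`. -/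
def LazyJudg (Γ : List LTy) (τ : LTy) : Prop :=
  τ.noForall false ∧ ∀ σ ∈ Γ, σ.noForall true

namespace Der

/-- A derivation is cut-free when it contains no instance of `cut`. -/
def cutFree : ∀ {Γ M τ}, Der Γ M τ → Prop
  | _, _, _, .ax _ => True
  | _, _, _, .exch _ D => D.cutFree
  | _, _, _, .cut _ _ _ => False
  | _, _, _, .arrR _ D => D.cutFree
  | _, _, _, .arrL _ _ D₁ D₂ => D₁.cutFree ∧ D₂.cutFree
  | _, _, _, .allR _ D => D.cutFree
  | _, _, _, .allL _ _ D => D.cutFree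
  | _, _, _, .prom _ _ D => D.cutFree
  | _, _, _, .der _ D => D.cutFree
  | _, _, _, .weak _ D => D.cutFree
  | _, _, _, .contr _ _ D₁ D₂ => D₁.cutFree ∧ D₂.cutFree

/-- The size of a derivation (Definition 6.2): `1` for an axiom, `+1` for every
rule instance except contraction which counts `+3`; the administrative rule
`exch` (implicit in the multiset contexts of the paper) does not count. -/
def size : ∀ {Γ M τ}, Der Γ M τ → ℕ
  | _, _, _, .ax _ => 1
  | _, _, _, .exch _ D => D.size
  | _, _, _, .cut _ D₁ D₂ => D₁.size + D₂.size + 1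
  | _, _, _, .arrR _ D => D.size + 1
  | _, _, _, .arrL _ _ D₁ D₂ => D₁.size + D₂.size + 1
  | _, _, _, .allR _ D => D.size + 1
  | _, _, _, .allL _ _ D => D.size + 1
  | _, _, _, .prom _ _ D => D.size + 1
  | _, _, _, .der _ D => D.size + 1
  | _, _, _, .weak _ D => D.size + 1
  | _, _, _, .contr _ _ D₁ D₂ => D₁.size + D₂.size + 3

end Der

end LEMPaper

namespace LEMPaper

namespace Der

/-- All the judgments occurring in a derivation are lazy. -/
def allLazy : ∀ {Γ M τ}, Der Γ M τ → Prop
  | _, _, _, .ax (A := A) _ => LazyJudg [A] A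
  | _, _, _, .exch (σ := σ) (τ := τ') (Γ₂ := Γ₂) (C := C) Γ₁ D =>
      LazyJudg (Γ₁ ++ τ' :: σ :: Γ₂) C ∧ D.allLazy
  | _, _, _, .cut (Δ := Δ) (τ := τ) Γ D₁ D₂ =>
      LazyJudg (Γ ++ Δ) τ ∧ D₁.allLazy ∧ D₂.allLazy
  | _, _, _, .arrR (Γ := Γ) (σ := σ) (B := B) _ D =>
      LazyJudg Γ (σ.arr B) ∧ D.allLazy
  | _, _, _, .arrL (Δ := Δ) (σ := σ) (B := B) (τ := τ) Γ _ D₁ D₂ =>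
      LazyJudg ((σ.arr B) :: (Γ ++ Δ)) τ ∧ D₁.allLazy ∧ D₂.allLazy
  | _, _, _, .allR (Γ := Γ) (A := A) _ D =>
      LazyJudg Γ (.all A) ∧ D.allLazy
  | _, _, _, .allL (Γ := Γ) (A := A) (τ := τ) _ _ D =>
      LazyJudg ((.all A) :: Γ) τ ∧ D.allLazy
  | _, _, _, .prom (Γ := Γ) (σ := σ) _ _ D =>
      LazyJudg Γ (.bang σ) ∧ D.allLazy
  | _, _, _, .der (Γ := Γ) (σ := σ) (τ := τ) _ D =>
      LazyJudg ((.bang σ) :: Γ) τ ∧ D.allLazy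
  | _, _, _, .weak (Γ := Γ) (σ := σ) (τ := τ) _ D =>
      LazyJudg ((.bang σ) :: Γ) τ ∧ D.allLazy
  | _, _, _, .contr (Γ := Γ) (σ := σ) (τ := τ) _ _ D₁ D₂ =>
      LazyJudg ((.bang σ) :: Γ) τ ∧ D₁.allLazy ∧ D₂.allLazy

/-- The derivation contains no instance of `∀L`, `d`, `w`, `c`, nor of `p` with a
non-empty context. -/
def goodRules : ∀ {Γ M τ}, Der Γ M τ → Prop
  | _, _, _, .ax _ => True
  | _, _, _, .exch _ D => D.goodRules
  | _, _, _, .cut _ D₁ D₂ => D₁.goodRules ∧ D₂.goodRules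
  | _, _, _, .arrR _ D => D.goodRules
  | _, _, _, .arrL _ _ D₁ D₂ => D₁.goodRules ∧ D₂.goodRules
  | _, _, _, .allR _ D => D.goodRules
  | _, _, _, .allL _ _ _ => False
  | _, _, _, .prom (Γ := Γ) _ _ D => Γ = [] ∧ D.goodRules
  | _, _, _, .der _ _ => False
  | _, _, _, .weak _ _ => False
  | _, _, _, .contr _ _ _ _ => False

end Der

namespace LTy

lemma noForall_rename : ∀ (A : LTy) (f : ℕ → ℕ) (b : Bool),
    ((A.rename f).noForall b ↔ A.noForall b) := by
  intro A
  induction A with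
  | var n => intro f b; simp [rename, noForall]
  | arr A B ihA ihB => intro f b; simp [rename, noForall, ihA, ihB]
  | all A ih => intro f b; simp [rename, noForall, ih]
  | bang A ih => intro f b; simp [rename, noForall, ih]

lemma closedAt_rename : ∀ (A : LTy) (f : ℕ → ℕ) (d d' : ℕ),
    (∀ n, n < d → f n < d') → A.ClosedAt d → (A.rename f).ClosedAt d' := by
  intro A
  induction A with
  | var n => intro f d d' hf h; exact hf n h
  | arr A B ihA ihB =>
      intro f d d' hf h
      exact ⟨ihA f d d' hf h.1, ihB f d d' hf h.2⟩
  | all A ih =>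
      intro f d d' hf h
      refine ih (liftRen f) (d+1) (d'+1) ?_ h
      intro n hn
      cases n with
      | zero => simp [liftRen]
      | succ m => simpa [liftRen, Nat.succ_lt_succ_iff] using hf m (Nat.succ_lt_succ_iff.mp hn)
  | bang A ih => intro f d d' hf h; exact ih f d d' hf h

lemma closedAt_unrename : ∀ (A : LTy) (f : ℕ → ℕ) (d d' : ℕ),
    (∀ n, f n < d' → n < d) → (A.rename f).ClosedAt d' → A.ClosedAt d := by
  intro A
  induction A with
  | var n => intro f d d' hf h; exact hf n h
  | arr A B ihA ihB =>
      intro f d d' hf h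
      exact ⟨ihA f d d' hf h.1, ihB f d d' hf h.2⟩
  | all A ih =>
      intro f d d' hf h
      refine ih (liftRen f) (d+1) (d'+1) ?_ h
      intro n hn
      cases n with
      | zero => simp
      | succ m =>
          simp only [liftRen, Nat.succ_lt_succ_iff] at hn ⊢
          exact hf m hn
  | bang A ih => intro f d d' hf h; exact ih f d d' hf h

lemma isLinear_isExp_rename : ∀ (A : LTy) (f : ℕ → ℕ),
    ((A.rename f).IsLinear ↔ A.IsLinear) ∧ ((A.rename f).IsExp ↔ A.IsExp) := by
  intro A
  induction A with
  | var n =>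
      intro f
      constructor
      · simp only [rename]; exact ⟨fun _ => .var n, fun _ => .var _⟩
      · simp only [rename]; exact ⟨fun _ => .lin (.var n), fun _ => .lin (.var _)⟩
  | arr A B ihA ihB =>
      intro f
      have hlin : ((arr A B).rename f).IsLinear ↔ (arr A B).IsLinear := by
        simp only [rename]
        constructor
        · intro h; cases h with
          | arr h1 h2 => exact .arr ((ihA f).2.mp h1) ((ihB f).1.mp h2)
        · intro h; cases h with
          | arr h1 h2 => exact .arr ((ihA f).2.mpr h1) ((ihB f).1.mpr h2)
      refine ⟨hlin, ?_⟩
      constructor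
      · intro h
        simp only [rename] at h
        cases h with
        | lin h => exact .lin (hlin.mp h)
      · intro h
        cases h with
        | lin h => exact .lin (hlin.mpr h)
  | all A ih =>
      intro f
      have hlin : ((all A).rename f).IsLinear ↔ (all A).IsLinear := by
        simp only [rename]
        constructor
        · intro h; cases h with
          | all h => exact .all ((ih (liftRen f)).1.mp h)
        · intro h; cases h with
          | all h => exact .all ((ih (liftRen f)).1.mpr h)
      refine ⟨hlin, ?_⟩
      constructor
      · intro h
        simp only [rename] at h
        cases h with
        | lin h => exact .lin (hlin.mp h)
      · intro h
        cases h with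
        | lin h => exact .lin (hlin.mpr h)
  | bang A ih =>
      intro f
      constructor
      · simp only [rename]
        constructor
        · intro h; cases h
        · intro h; cases h
      · simp only [rename]
        constructor
        · intro h
          cases h with
          | lin h => cases h
          | bang h1 h2 h3 =>
              exact .bang ((ih f).2.mp h1)
                (closedAt_unrename A f 0 0 (fun n hn => absurd hn (Nat.not_lt_zero _)) h2)
                ((noForall_rename A f false).mp h3)
        · intro h
          cases h with
          | lin h => cases h
          | bang h1 h2 h3 =>
              exact .bang ((ih f).2.mpr h1)
                (closedAt_rename A f 0 0 (fun n hn => absurd hn (Nat.not_lt_zero _)) h2)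
                ((noForall_rename A f false).mpr h3)

lemma bangOk_rename (A : LTy) (f : ℕ → ℕ) : (A.rename f).BangOk ↔ A.BangOk := by
  unfold BangOk
  rw [(isLinear_isExp_rename A f).2, noForall_rename]
  constructor
  · rintro ⟨h1, h2, h3⟩
    exact ⟨h1, closedAt_unrename A f 0 0 (fun n hn => absurd hn (Nat.not_lt_zero _)) h2, h3⟩
  · rintro ⟨h1, h2, h3⟩
    exact ⟨h1, closedAt_rename A f 0 0 (fun n hn => absurd hn (Nat.not_lt_zero _)) h2, h3⟩

lemma not_closedAt_zero_of_noForall :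
    ∀ (A : LTy), A.noForall true → A.noForall false → ¬ A.ClosedAt 0 := by
  intro A
  induction A with
  | var n => intro _ _ h; exact absurd h (Nat.not_lt_zero n)
  | arr A B ihA ihB =>
      intro h1 h2 h
      exact ihA h2.1 h1.1 h.1
  | all A ih =>
      intro h1 _ _
      exact absurd h1.1 (by simp)
  | bang A ih =>
      intro h1 h2 h
      exact ih h1 h2 h

end LTy

/-- In a cut-free derivation, every top-level `♯` type in the context is
well-formed. -/
lemma Der.cutFree_bang_bangOk : ∀ {Γ M τ} (D : Der Γ M τ), D.cutFree →
    ∀ ρ : LTy, LTy.bang ρ ∈ Γ → ρ.BangOk := by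
  intro Γ M τ D
  induction D with
  | ax h =>
      intro _ ρ hm
      simp only [List.mem_singleton] at hm
      rw [← hm] at h
      cases h
  | exch Γ₁ D ih =>
      intro hcf ρ hm
      refine ih hcf ρ ?_
      simp only [List.mem_append, List.mem_cons] at hm ⊢
      tauto
  | cut Γ D₁ D₂ ih₁ ih₂ =>
      intro hcf; exact absurd hcf (by simp [Der.cutFree])
  | arrR hB D ih =>
      intro hcf ρ hm
      exact ih hcf ρ (List.mem_cons_of_mem _ hm)
  | arrL Γ hB D₁ D₂ ih₁ ih₂ =>
      intro hcf ρ hm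
      simp only [List.mem_cons, List.mem_append] at hm
      rcases hm with hm | hm | hm
      · exact absurd hm (by simp)
      · exact ih₁ hcf.1 ρ hm
      · exact ih₂ hcf.2 ρ (List.mem_cons_of_mem _ hm)
  | allR hA D ih =>
      intro hcf ρ hm
      have : LTy.bang (ρ.rename Nat.succ) ∈ _ := List.mem_map_of_mem (f := LTy.shift) hm
      exact (LTy.bangOk_rename ρ Nat.succ).mp (ih hcf _ this)
  | allL B hB D ih =>
      intro hcf ρ hm
      simp only [List.mem_cons] at hm
      rcases hm with hm | hm
      · exact absurd hm (by simp)
      · exact ih hcf ρ (List.mem_cons_of_mem _ hm)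
  | prom hσ hΓ D ih =>
      intro hcf ρ hm; exact ih hcf ρ hm
  | der hσ D ih =>
      intro hcf ρ hm
      simp only [List.mem_cons] at hm
      rcases hm with hm | hm
      · rw [LTy.bang.injEq] at hm; exact hm ▸ hσ
      · exact ih hcf ρ (List.mem_cons_of_mem _ hm)
  | weak hσ D ih =>
      intro hcf ρ hm
      simp only [List.mem_cons] at hm
      rcases hm with hm | hm
      · rw [LTy.bang.injEq] at hm; exact hm ▸ hσ
      · exact ih hcf ρ hm
  | contr hσ hV D₁ D₂ ih₁ ih₂ =>
      intro hcf ρ hm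
      simp only [List.mem_cons] at hm
      rcases hm with hm | hm
      · rw [LTy.bang.injEq] at hm; exact hm ▸ hσ
      · exact ih₁ hcf.1 ρ (List.mem_cons_of_mem _ (List.mem_cons_of_mem _ hm))

lemma bang_in_lazy_ctx_absurd {Γ : List LTy} {σ : LTy}
    (hσ : σ.BangOk) (hmem : ∀ γ ∈ Γ, γ.noForall true) (h : LTy.bang σ ∈ Γ) : False := by
  have h1 : σ.noForall true := by
    have := hmem _ h
    simpa [LTy.noForall] using this
  exact LTy.not_closedAt_zero_of_noForall σ h1 hσ.2.2 hσ.2.1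

theorem cutFree_lazy_aux : ∀ {Γ M τ} (D : Der Γ M τ),
    D.cutFree → LazyJudg Γ τ → D.allLazy ∧ D.goodRules := by
  intro Γ M τ D
  induction D with
  | ax h =>
      intro _ hlazy
      exact ⟨hlazy, trivial⟩
  | exch Γ₁ D ih =>
      rename_i σ' τ' Γ₂ M' C
      intro hcf hlazy
      have hlazy' : LazyJudg (Γ₁ ++ σ' :: τ' :: Γ₂) C := by
        refine ⟨hlazy.1, ?_⟩
        intro γ hγ
        refine hlazy.2 γ ?_
        simp only [List.mem_append, List.mem_cons] at hγ ⊢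
        tauto
      exact ⟨⟨hlazy, (ih hcf hlazy').1⟩, (ih hcf hlazy').2⟩
  | cut Γ D₁ D₂ ih₁ ih₂ =>
      intro hcf
      exact False.elim hcf
  | arrR hB D ih =>
      rename_i Γ' M' σ' B
      intro hcf hlazy
      have ht : σ'.noForall true ∧ B.noForall false := by
        have := hlazy.1
        simpa [LTy.noForall] using this
      have hlazy' : LazyJudg (σ' :: Γ') B := by
        refine ⟨ht.2, ?_⟩
        intro γ hγ
        rcases List.mem_cons.mp hγ with h | h
        · subst h; exact ht.1
        · exact hlazy.2 γ h
      exact ⟨⟨hlazy, (ih hcf hlazy').1⟩, (ih hcf hlazy').2⟩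
  | arrL Γ hB D₁ D₂ ih₁ ih₂ =>
      rename_i Δ N' M' σ' B τ'
      intro hcf hlazy
      have hhd : σ'.noForall false ∧ B.noForall true := by
        have := hlazy.2 _ (List.mem_cons_self)
        simpa [LTy.noForall] using this
      have hlazy₁ : LazyJudg Γ σ' := by
        refine ⟨hhd.1, ?_⟩
        intro γ hγ
        exact hlazy.2 γ (List.mem_cons_of_mem _ (List.mem_append_left _ hγ))
      have hlazy₂ : LazyJudg (B :: Δ) τ' := by
        refine ⟨hlazy.1, ?_⟩
        intro γ hγ
        rcases List.mem_cons.mp hγ with h | h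
        · subst h; exact hhd.2
        · exact hlazy.2 γ (List.mem_cons_of_mem _ (List.mem_append_right _ h))
      exact ⟨⟨hlazy, (ih₁ hcf.1 hlazy₁).1, (ih₂ hcf.2 hlazy₂).1⟩,
        (ih₁ hcf.1 hlazy₁).2, (ih₂ hcf.2 hlazy₂).2⟩
  | allR hA D ih =>
      rename_i Γ' M' A
      intro hcf hlazy
      have ht : A.noForall false := by
        have := hlazy.1
        simpa [LTy.noForall] using this
      have hlazy' : LazyJudg (Γ'.map LTy.shift) A := by
        refine ⟨ht, ?_⟩
        intro γ hγ
        rcases List.mem_map.mp hγ with ⟨δ, hδ, rfl⟩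
        exact (LTy.noForall_rename δ Nat.succ true).mpr (hlazy.2 δ hδ)
      exact ⟨⟨hlazy, (ih hcf hlazy').1⟩, (ih hcf hlazy').2⟩
  | allL B hB D ih =>
      intro _ hlazy
      have := hlazy.2 _ (List.mem_cons_self)
      exact absurd this (by simp [LTy.noForall])
  | prom hσ hΓ D ih =>
      rename_i Γ' M' σ'
      intro hcf hlazy
      have hΓnil : Γ' = [] := by
        rcases hG : Γ' with _ | ⟨γ, Γ''⟩
        · rfl
        · exfalso
          subst hG
          rcases hΓ γ (List.mem_cons_self) with ⟨ρ, rfl⟩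
          have hρ : ρ.BangOk :=
            Der.cutFree_bang_bangOk (Der.prom hσ hΓ D) hcf ρ (List.mem_cons_self)
          exact bang_in_lazy_ctx_absurd hρ hlazy.2 (List.mem_cons_self)
      have hlazy' : LazyJudg Γ' σ' := ⟨hσ.2.2, hlazy.2⟩
      exact ⟨⟨hlazy, (ih hcf hlazy').1⟩, ⟨hΓnil, (ih hcf hlazy').2⟩⟩
  | der hσ D ih =>
      intro _ hlazy
      exact (bang_in_lazy_ctx_absurd hσ hlazy.2 (List.mem_cons_self)).elim
  | weak hσ D ih =>
      intro _ hlazy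
      exact (bang_in_lazy_ctx_absurd hσ hlazy.2 (List.mem_cons_self)).elim
  | contr hσ hV D₁ D₂ ih₁ ih₂ =>
      intro _ hlazy
      exact (bang_in_lazy_ctx_absurd hσ hlazy.2 (List.mem_cons_self)).elim

/-- Lemma 6.1.(5): if `D` is a cut-free and lazy derivation of
`LEM`, then all the judgments occurring in `D` are lazy, and `D` contains no
instance of the rules `∀L`, `d`, `w`, `c`, nor of the rule `p` with a non-empty
context. -/
theorem cutFree_lazy_derivation_allLazy_goodRules
    {Γ : List LTy} {M : LTm} {τ : LTy} (D : Der Γ M τ)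
    (hcf : D.cutFree) (hlazy : LazyJudg Γ τ) :
    D.allLazy ∧ D.goodRules := by
  exact cutFree_lazy_aux D hcf hlazy

end LEMPaper
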